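/- Let m ≤ n be positive integers and let a_1 < a_2 < ... < a_m be distinct positive integers. For every x ∈ ℝ^n with nonnegative coordinates, there exist a vector y ∈ ℝ^n with nonnegative coordinates whose nonzero coordinates take at most m distinct values (i.e., the set { y_i : y_i ≠ 0 } has cardinality at most m), and a real number t > 0, such that Σ_{i=1}^n y_i^{a_j} = t^{a_j} · Σ_{i=1}^n x_i^{a_j} for all j = 1, ..., m. (Equivalently, the image of the normalized norm map ψ_A into the probability simplex Δ_{m−1} is the union of the curvy (m−1)-simplices B_ν over ν ∈ C([n], m).) -/

import Mathlib

open Set Filter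
open scoped Topology

lemma rolle_list (F F' : ℝ → ℝ) (hF : ∀ v, HasDerivAt F (F' v) v) :
    ∀ (l : List ℝ) (x : ℝ), (x :: l).Chain' (· < ·) → (∀ v ∈ x :: l, F v = 0) →
    ∃ w : List ℝ, w.length = l.length ∧ w.Chain' (· < ·) ∧
      ∀ v ∈ w, F' v = 0 ∧ x < v := by
  intro l
  induction l with
  | nil => exact fun x _ _ => ⟨[], rfl, List.isChain_nil, by simp⟩
  | cons y l ih =>
    intro x hc h0
    have hxy : x < y := (List.isChain_cons_cons.mp hc).1
    obtain ⟨c, hcmem, hc0⟩ := exists_hasDerivAt_eq_zero hxy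
      (fun v _ => (hF v).continuousAt.continuousWithinAt)
      (by rw [h0 x (by simp), h0 y (by simp)])
      (fun v _ => hF v)
    obtain ⟨w, hw1, hw2, hw3⟩ := ih y (List.isChain_cons_cons.mp hc).2
      (fun v hv => h0 v (List.mem_cons_of_mem _ hv))
    refine ⟨c :: w, by simp [hw1], ?_, ?_⟩
    · show List.IsChain _ _
      rw [List.isChain_cons]
      refine ⟨fun h hh => ?_, hw2⟩
      have := (hw3 h (List.mem_of_mem_head? hh)).2
      exact lt_trans hcmem.2 this
    · intro v hv
      rcases List.mem_cons.mp hv with rfl | hv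
      · exact ⟨hc0, hcmem.1⟩
      · exact ⟨(hw3 v hv).1, lt_trans hxy (hw3 v hv).2⟩

lemma few_roots : ∀ (k : ℕ) (s : Finset ℕ), s.card = k → ∀ (c : ℕ → ℝ) (l : List ℝ),
    l.Chain' (· < ·) → (∀ v ∈ l, 0 < v) → (∀ v ∈ l, ∑ e ∈ s, c e * v ^ e = 0) →
    s.card ≤ l.length → ∀ e ∈ s, c e = 0 := by
  intro k
  induction k with
  | zero =>
    intro s hs
    rw [Finset.card_eq_zero] at hs
    subst hs
    simp
  | succ k ih =>
    intro s hs c l hchain hpos hroot hlen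
    have hsne : s.Nonempty := Finset.card_pos.mp (by omega)
    set e₀ := s.min' hsne with he₀
    have he₀s : e₀ ∈ s := s.min'_mem hsne
    have he₀le : ∀ e ∈ s, e₀ ≤ e := fun e he => s.min'_le e he
    set G : ℝ → ℝ := fun v => ∑ e ∈ s, c e * v ^ (e - e₀) with hG
    set G' : ℝ → ℝ := fun v => ∑ e ∈ s, c e * (((e - e₀ : ℕ) : ℝ) * v ^ (e - e₀ - 1)) with hG'
    have hGd : ∀ v, HasDerivAt G (G' v) v := by
      intro v
      exact HasDerivAt.fun_sum fun e he => (hasDerivAt_pow (e - e₀) v).const_mul (c e)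
    have hGroot : ∀ v ∈ l, G v = 0 := by
      intro v hv
      have hv0 : (0:ℝ) < v := hpos v hv
      have := hroot v hv
      have hfac : ∑ e ∈ s, c e * v ^ e = v ^ e₀ * G v := by
        simp only [hG, Finset.mul_sum]
        refine Finset.sum_congr rfl fun e he => ?_
        have hle := he₀le e he
        have hpow : v ^ e = v ^ e₀ * v ^ (e - e₀) := by
          rw [← pow_add]
          congr 1
          omega
        rw [hpow]
        ring
      rw [hfac] at this
      rcases mul_eq_zero.mp this with h | h
      · exact absurd h (pow_ne_zero _ (ne_of_gt hv0))
      · exact h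
    -- l is nonempty
    obtain ⟨x, l', rfl⟩ : ∃ x l', l = x :: l' := by
      cases l with
      | nil => rw [hs] at hlen; simp at hlen
      | cons x l' => exact ⟨x, l', rfl⟩
    obtain ⟨w, hw1, hw2, hw3⟩ := rolle_list G G' hGd l' x hchain hGroot
    have hx0 : (0:ℝ) < x := hpos x (by simp)
    -- new exponent set
    have hinj : Set.InjOn (fun e => e - e₀ - 1) (s.erase e₀) := by
      intro e he e' he' hee
      have h1 : e₀ < e := lt_of_le_of_ne (he₀le e (Finset.mem_of_mem_erase he))
        (Ne.symm (Finset.ne_of_mem_erase he))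
      have h2 : e₀ < e' := lt_of_le_of_ne (he₀le e' (Finset.mem_of_mem_erase he'))
        (Ne.symm (Finset.ne_of_mem_erase he'))
      simp only at hee
      omega
    set s' : Finset ℕ := (s.erase e₀).image (fun e => e - e₀ - 1) with hs'
    set c' : ℕ → ℝ := fun d => ∑ e ∈ s.erase e₀, if e - e₀ - 1 = d then c e * ((e - e₀ : ℕ) : ℝ) else 0 with hc'
    have hc'val : ∀ e ∈ s.erase e₀, c' (e - e₀ - 1) = c e * ((e - e₀ : ℕ) : ℝ) := by
      intro e he
      show (∑ e' ∈ s.erase e₀, if e' - e₀ - 1 = e - e₀ - 1 then c e' * ((e' - e₀ : ℕ) : ℝ) else 0) = _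
      rw [Finset.sum_eq_single e]
      · simp
      · intro e' he' hne
        have hne2 : e' - e₀ - 1 ≠ e - e₀ - 1 := hinj.ne he' he hne
        exact if_neg hne2
      · intro h; exact absurd he h
    have hcard' : s'.card = k := by
      rw [hs', Finset.card_image_of_injOn hinj, Finset.card_erase_of_mem he₀s, hs]
      omega
    have hG'eq : ∀ v : ℝ, ∑ d ∈ s', c' d * v ^ d = G' v := by
      intro v
      rw [hs', Finset.sum_image (fun x hx y hy h => hinj hx hy h)]
      simp only [hG']
      rw [← Finset.add_sum_erase _ (fun e => c e * (((e - e₀ : ℕ) : ℝ) * v ^ (e - e₀ - 1))) he₀s]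
      simp only [Nat.sub_self, Nat.cast_zero, zero_mul, mul_zero, zero_add]
      refine Finset.sum_congr rfl fun e he => ?_
      rw [hc'val e he]
      ring
    have hroots' : ∀ v ∈ w, ∑ d ∈ s', c' d * v ^ d = 0 := fun v hv => by
      rw [hG'eq]; exact (hw3 v hv).1
    have hlen' : s'.card ≤ w.length := by
      rw [hcard', hw1]
      simp at hlen; omega
    have hkey := ih s' hcard' c' w hw2 (fun v hv => lt_trans hx0 (hw3 v hv).2) hroots' hlen'
    have hcz : ∀ e ∈ s.erase e₀, c e = 0 := by
      intro e he
      have h1 : e₀ < e := lt_of_le_of_ne (he₀le e (Finset.mem_of_mem_erase he))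
        (Ne.symm (Finset.ne_of_mem_erase he))
      have := hkey (e - e₀ - 1) (Finset.mem_image_of_mem _ he)
      rw [hc'val e he] at this
      rcases mul_eq_zero.mp this with h | h
      · exact h
      · exfalso
        have : e - e₀ ≠ 0 := by omega
        simpa [this] using h
    have hce₀ : c e₀ = 0 := by
      have hGx : G x = 0 := hGroot x (by simp)
      simp only [hG] at hGx
      rw [← Finset.add_sum_erase _ (fun e => c e * x ^ (e - e₀)) he₀s,
        Finset.sum_eq_zero (fun e he => by rw [hcz e he]; ring)] at hGx
      simp at hGx
      exact hGx
    intro e he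
    rcases eq_or_ne e e₀ with rfl | hne
    · exact hce₀
    · exact hcz e (Finset.mem_erase.mpr ⟨hne, he⟩)

lemma pow_sum_hasStrictFDerivAt {ι : Type} [Fintype ι] (z₀ : ι → ℝ) (e : ℕ) :
    HasStrictFDerivAt (fun z : ι → ℝ => ∑ i, z i ^ e)
      (∑ i : ι, ((e : ℝ) * z₀ i ^ (e - 1)) • ContinuousLinearMap.proj (R := ℝ) (φ := fun _ : ι => ℝ) i) z₀ := by
  apply HasStrictFDerivAt.fun_sum
  intro i _
  have h1 : HasStrictFDerivAt (fun z : ι → ℝ => z i)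
      (ContinuousLinearMap.proj (R := ℝ) (φ := fun _ : ι => ℝ) i) z₀ := by
    have h := (ContinuousLinearMap.proj (R := ℝ) (φ := fun _ : ι => ℝ) i).hasStrictFDerivAt (x := z₀)
    exact h
  exact (hasStrictDerivAt_pow e (z₀ i)).comp_hasStrictFDerivAt z₀ h1

lemma deriv_apply_single {ι : Type} [Fintype ι] [DecidableEq ι] (z₀ : ι → ℝ) (e : ℕ) (i : ι) :
    (∑ i' : ι, ((e : ℝ) * z₀ i' ^ (e - 1)) • ContinuousLinearMap.proj (R := ℝ) (φ := fun _ : ι => ℝ) i')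
      (Pi.single i 1) = (e : ℝ) * z₀ i ^ (e - 1) := by
  rw [ContinuousLinearMap.sum_apply]
  simp only [ContinuousLinearMap.smul_apply, ContinuousLinearMap.proj_apply, Pi.single_apply]
  simp [Finset.sum_ite_eq']


/-- For `m ≤ n` and distinct positive exponents `a_1 < … < a_m`: every nonnegative
vector `x ∈ ℝ^n` matches, up to a common positive scaling `t` of the norms, a
nonnegative vector `y` whose nonzero coordinates take at most `m` distinct values,
i.e. `∑_i y_i^{a_j} = t^{a_j} ∑_i x_i^{a_j}` for all `j`. (The image of the
normalized norm map `ψ_A` in the simplex `Δ_{m−1}` is the union of the curvy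
`(m−1)`-simplices `B_ν`, `ν ∈ C([n],m)`.) -/
theorem powerSum_norm_map_image_curvy_simplices
    (n m : ℕ) (hn : 0 < n) (hm : 0 < m) (hmn : m ≤ n)
    (a : Fin m → ℕ) (ha : StrictMono a) (hapos : ∀ j, 0 < a j)
    (x : Fin n → ℝ) (hx : ∀ i, 0 ≤ x i) :
    ∃ (y : Fin n → ℝ) (t : ℝ), (∀ i, 0 ≤ y i) ∧ 0 < t ∧
      (Set.range y \ {0}).ncard ≤ m ∧
      ∀ j : Fin m, ∑ i : Fin n, y i ^ a j = t ^ a j * ∑ i : Fin n, x i ^ a j := by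
  classical
  set p : Fin m → ℝ := fun j => ∑ i, x i ^ a j with hp
  set K : Set (Fin n → ℝ) := {y | (∀ i, 0 ≤ y i) ∧ ∀ j, ∑ i, y i ^ a j = p j} with hK
  have hxK : x ∈ K := ⟨hx, fun j => rfl⟩
  set jlast : Fin m := ⟨m - 1, by omega⟩ with hjlast
  set N : ℕ := a jlast + 1 with hN
  have haN : ∀ j, a j < N := by
    intro j
    have : a j ≤ a jlast := ha.monotone (by rw [Fin.le_def]; simp [hjlast]; omega)
    omega
  set j0 : Fin m := ⟨0, hm⟩ with hj0
  have hp0 : 0 ≤ p j0 := Finset.sum_nonneg fun i _ => pow_nonneg (hx i) _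
  -- K is compact
  have hKclosed : IsClosed K := by
    have : K = (⋂ i, {y : Fin n → ℝ | 0 ≤ y i}) ∩ (⋂ j, {y : Fin n → ℝ | ∑ i, y i ^ a j = p j}) := by
      ext y
      simp [hK, Set.mem_iInter]
    rw [this]
    refine IsClosed.inter (isClosed_iInter fun i => ?_) (isClosed_iInter fun j => ?_)
    · exact isClosed_le continuous_const (continuous_apply i)
    · exact isClosed_eq (continuous_finset_sum _ fun i _ => (continuous_apply i).pow _) continuous_const
  have hKbdd : Bornology.IsBounded K := by
    rw [isBounded_iff_forall_norm_le]
    refine ⟨1 + p j0, fun y hy => ?_⟩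
    rw [pi_norm_le_iff_of_nonneg (by linarith)]
    intro i
    rw [Real.norm_eq_abs, abs_of_nonneg (hy.1 i)]
    rcases le_or_gt (y i) 1 with h | h
    · linarith
    · have h1 : y i ≤ y i ^ a j0 := le_self_pow₀ (le_of_lt h) (by have := hapos j0; omega)
      have h2 : y i ^ a j0 ≤ p j0 := by
        rw [← hy.2 j0]
        exact Finset.single_le_sum (fun i _ => pow_nonneg (hy.1 i) _) (Finset.mem_univ i)
      linarith
  have hKcpt : IsCompact K := Metric.isCompact_of_isClosed_isBounded hKclosed hKbdd
  -- minimize f = ∑ yᵢ^N over K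
  obtain ⟨y, hyK, hymin⟩ := hKcpt.exists_isMinOn ⟨x, hxK⟩
    ((continuous_finset_sum _ fun i _ => (continuous_apply i).pow N).continuousOn
      (s := K) (f := fun y : Fin n → ℝ => ∑ i, y i ^ N))
  refine ⟨y, 1, hyK.1, one_pos, ?_, fun j => by rw [hyK.2 j]; simp; rfl⟩
  -- main claim: y has at most m distinct nonzero values
  by_contra hcon
  push_neg at hcon
  have hfin : (Set.range y \ {0}).Finite := (Set.finite_range y).diff
  obtain ⟨V, hVsub, hVcard⟩ := Set.exists_subset_card_eq (show m + 1 ≤ (Set.range y \ {0}).ncard by omega)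
  have hVfin : V.Finite := hfin.subset hVsub
  -- the subtype of nonzero coordinates
  set ι := {i : Fin n // y i ≠ 0} with hι
  have hne : Nonempty ι := by
    have : V.Nonempty := by
      rw [← Set.ncard_pos hVfin, hVcard]; omega
    obtain ⟨v, hv⟩ := this
    obtain ⟨⟨i, rfl⟩, hv0⟩ := hVsub hv
    exact ⟨⟨i, hv0⟩⟩
  have hposι : ∀ i : ι, 0 < y i.1 := fun i => lt_of_le_of_ne (hyK.1 i.1) (Ne.symm i.2)
  set z₀ : ι → ℝ := fun i => y i.1 with hz₀
  set G : Fin m → (ι → ℝ) → ℝ := fun j z => ∑ i, z i ^ a j with hG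
  set Φ : (ι → ℝ) → ℝ := fun z => ∑ i, z i ^ N with hΦ
  -- splitting sums
  have hsplit : ∀ (w : Fin n → ℝ), (∀ i, y i = 0 → w i = 0) → ∀ e : ℕ, 0 < e →
      ∑ i : Fin n, w i ^ e = ∑ i : ι, w i.1 ^ e := by
    intro w hw e he
    rw [← Finset.sum_subtype (Finset.univ.filter (fun i => y i ≠ 0))
      (fun i => by simp [hι]) (fun i => w i ^ e)]
    symm
    apply Finset.sum_subset (Finset.filter_subset _ _)
    intro i _ hi
    simp only [Finset.mem_filter, Finset.mem_univ, true_and, not_not] at hi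
    rw [hw i hi, zero_pow (by omega)]
  -- the local extremum
  have hextr : IsLocalExtrOn Φ {z | ∀ j, G j z = G j z₀} z₀ := by
    apply IsMinFilter.isExtr
    set ε : ℝ := Finset.univ.inf' (by simpa using Finset.univ_nonempty) (fun i : ι => y i.1) with hε
    have hεpos : 0 < ε := by
      rw [hε, Finset.lt_inf'_iff]
      exact fun i _ => hposι i
    have hball : Metric.ball z₀ ε ∈ 𝓝[{z | ∀ j, G j z = G j z₀}] z₀ :=
      nhdsWithin_le_nhds (Metric.ball_mem_nhds _ hεpos)
    filter_upwards [hball, self_mem_nhdsWithin] with z hz1 hz2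
    -- z has positive coordinates
    have hzpos : ∀ i : ι, 0 < z i := by
      intro i
      have h1 : dist (z i) (z₀ i) ≤ dist z z₀ := dist_le_pi_dist z z₀ i
      have h2 : dist z z₀ < ε := hz1
      have h3 : ε ≤ y i.1 := Finset.inf'_le _ (Finset.mem_univ i)
      rw [Real.dist_eq] at h1
      have := abs_lt.mp (lt_of_le_of_lt h1 h2)
      simp only [hz₀] at this
      linarith [this.1]
    -- extend z by zero
    set w : Fin n → ℝ := fun i => if h : y i ≠ 0 then z ⟨i, h⟩ else 0 with hw
    have hwsupp : ∀ i, y i = 0 → w i = 0 := by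
      intro i hi; simp [hw, hi]
    have hwval : ∀ i : ι, w i.1 = z i := by
      intro i
      simp only [hw, dif_pos i.2]
      rfl
    have hwK : w ∈ K := by
      constructor
      · intro i
        rcases eq_or_ne (y i) 0 with h | h
        · simp [hw, h]
        · have hwi : w i = z ⟨i, h⟩ := by simp [hw, h]
          rw [hwi]
          exact le_of_lt (hzpos ⟨i, h⟩)
      · intro j
        rw [hsplit w hwsupp (a j) (hapos j)]
        have : ∑ i : ι, w i.1 ^ a j = G j z := by
          rw [hG]
          exact Finset.sum_congr rfl fun i _ => by rw [hwval i]
        rw [this, hz2 j]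
        rw [hG]
        simp only [hz₀]
        rw [← hsplit y (fun i hi => hi) (a j) (hapos j)]
        exact hyK.2 j
    have h1 : Φ z₀ = ∑ i : Fin n, y i ^ N := by
      rw [hΦ]
      simp only [hz₀]
      rw [← hsplit y (fun i hi => hi) N (by omega)]
    have h2 : Φ z = ∑ i : Fin n, w i ^ N := by
      rw [hΦ, hsplit w hwsupp N (by omega)]
      exact Finset.sum_congr rfl fun i _ => by rw [hwval i]
    rw [h1, h2]
    exact hymin hwK
  -- Lagrange multipliers
  set L : Fin m → (ι → ℝ) →L[ℝ] ℝ := fun j =>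
    ∑ i : ι, ((a j : ℝ) * z₀ i ^ (a j - 1)) • ContinuousLinearMap.proj (R := ℝ) (φ := fun _ : ι => ℝ) i with hL
  set LΦ : (ι → ℝ) →L[ℝ] ℝ :=
    ∑ i : ι, ((N : ℝ) * z₀ i ^ (N - 1)) • ContinuousLinearMap.proj (R := ℝ) (φ := fun _ : ι => ℝ) i with hLΦ
  obtain ⟨Λ, Λ₀, hΛne, hΛ⟩ := hextr.exists_multipliers_of_hasStrictFDerivAt
    (f' := L) (fun j => pow_sum_hasStrictFDerivAt z₀ (a j)) (pow_sum_hasStrictFDerivAt z₀ N)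
  -- evaluate at single basis vectors
  have heval : ∀ i : ι, ∑ j, Λ j * ((a j : ℝ) * y i.1 ^ (a j - 1))
      + Λ₀ * ((N : ℝ) * y i.1 ^ (N - 1)) = 0 := by
    intro i
    have h0 := ContinuousLinearMap.ext_iff.mp hΛ (Pi.single i 1)
    simp only [ContinuousLinearMap.add_apply, ContinuousLinearMap.sum_apply,
      ContinuousLinearMap.smul_apply, ContinuousLinearMap.zero_apply, smul_eq_mul,
      hL, hLΦ, deriv_apply_single, hz₀] at h0
    simp only [ContinuousLinearMap.proj_apply, Pi.single_apply, mul_ite, mul_one, mul_zero,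
      Finset.sum_ite_eq', Finset.sum_ite_eq, Finset.mem_univ, if_true] at h0
    convert h0 using 2
    · refine Finset.sum_congr rfl fun j _ => ?_
      rw [Finset.sum_eq_single i (fun b _ hb => if_neg hb) (by simp), if_pos rfl]
    · rw [Finset.sum_eq_single i (fun b _ hb => if_neg hb) (by simp), if_pos rfl]
  -- exponent set and coefficients
  set sexp : Finset ℕ := insert (N - 1) (Finset.univ.image (fun j => a j - 1)) with hsexp
  have hainj : Function.Injective (fun j : Fin m => a j - 1) := by
    intro j j' h
    have h1 := hapos j
    have h2 := hapos j'
    simp only at h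
    exact ha.injective (by omega)
  have haltN : ∀ j, a j - 1 < N - 1 := fun j => by
    have h1 := haN j
    have h2 := hapos j
    omega
  have hNnotmem : N - 1 ∉ Finset.univ.image (fun j : Fin m => a j - 1) := by
    simp only [Finset.mem_image, Finset.mem_univ, true_and, not_exists]
    intro j hj
    have := haltN j
    omega
  have hscard : sexp.card = m + 1 := by
    rw [hsexp, Finset.card_insert_of_notMem hNnotmem,
      Finset.card_image_of_injective _ hainj]
    simp
  set c : ℕ → ℝ := fun d => (if d = N - 1 then Λ₀ * N else 0)
    + ∑ j, (if a j - 1 = d then Λ j * a j else 0) with hcdef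
  have hcN : c (N - 1) = Λ₀ * N := by
    simp only [hcdef, if_true]
    rw [Finset.sum_eq_zero fun j _ => if_neg (by have := haltN j; omega), add_zero]
  have hcj : ∀ j, c (a j - 1) = Λ j * a j := by
    intro j
    simp only [hcdef]
    rw [if_neg (by have := haltN j; omega), zero_add]
    rw [Finset.sum_eq_single j]
    · simp
    · intro j' _ hne
      exact if_neg (fun h => hne (hainj h))
    · simp
  -- the list of roots
  set r : Finset ℝ := hVfin.toFinset with hr
  have hrcard : r.card = m + 1 := by
    rw [hr, ← Set.ncard_eq_toFinset_card V hVfin, hVcard]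
  set l : List ℝ := r.sort (· ≤ ·) with hl
  have hlchain : l.Chain' (· < ·) := (Finset.sortedLT_sort r).isChain
  have hlmem : ∀ v ∈ l, v ∈ V := by
    intro v hv
    have h1 : v ∈ r := (Finset.mem_sort (α := ℝ) (· ≤ ·)).mp hv
    rwa [hr, Set.Finite.mem_toFinset] at h1
  have hlpos : ∀ v ∈ l, 0 < v := by
    intro v hv
    obtain ⟨⟨i, rfl⟩, h0⟩ := hVsub (hlmem v hv)
    exact lt_of_le_of_ne (hyK.1 i) (Ne.symm h0)
  have hlroot : ∀ v ∈ l, ∑ e ∈ sexp, c e * v ^ e = 0 := by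
    intro v hv
    obtain ⟨⟨i, rfl⟩, h0⟩ := hVsub (hlmem v hv)
    have hev := heval ⟨i, h0⟩
    have hexp : ∑ e ∈ sexp, c e * (y i) ^ e
        = ∑ j, Λ j * ((a j : ℝ) * y i ^ (a j - 1)) + Λ₀ * ((N : ℝ) * y i ^ (N - 1)) := by
      rw [hsexp, Finset.sum_insert hNnotmem,
        Finset.sum_image (fun j _ j' _ h => hainj h)]
      rw [hcN, add_comm]
      congr 1
      · exact Finset.sum_congr rfl fun j _ => by rw [hcj j]; ring
      · ring
    rw [hexp]
    exact hev
  have hlen : sexp.card ≤ l.length := by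
    rw [hscard, hl, Finset.length_sort, hrcard]
  have hall := few_roots (m + 1) sexp hscard c l hlchain hlpos hlroot hlen
  have hΛ₀ : Λ₀ = 0 := by
    have h := hall (N - 1) (by rw [hsexp]; exact Finset.mem_insert_self _ _)
    rw [hcN] at h
    have hN0 : (N : ℝ) ≠ 0 := Nat.cast_ne_zero.mpr (by omega)
    exact (mul_eq_zero.mp h).resolve_right hN0
  have hΛj : ∀ j, Λ j = 0 := by
    intro j
    have h := hall (a j - 1) (by
      rw [hsexp]
      exact Finset.mem_insert_of_mem (Finset.mem_image_of_mem _ (Finset.mem_univ j)))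
    rw [hcj j] at h
    have ha0 : ((a j : ℝ)) ≠ 0 := Nat.cast_ne_zero.mpr (by have := hapos j; omega)
    exact (mul_eq_zero.mp h).resolve_right ha0
  exact hΛne (by simp [Prod.ext_iff, funext_iff, hΛ₀, hΛj])
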